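/- Let S = ℝ² ∪ {∞} be the one-point compactification of the plane. Let E ⊆ S be a closed (hence compact) subset with ∞ ∈ E, and let E* ⊆ E and Z ⊆ E satisfy: Z is countably infinite; ∞ ∉ Z and Z ∩ E* = ∅; every point of Z is an isolated point of E; and the set of accumulation points of Z in E equals E*. Let F be a finite subset of ℝ² with F ∩ E = ∅. Then there exists a homeomorphism h : E ∪ F → E (both with the subspace topology from S) such that h restricted to E* is the identity and h(Z ∪ F) = Z. -/

import Mathlib

open Set Filter Topology

private noncomputable def chooseSeq {α : Type*} (P : ℕ → α → Prop)
    (key : ∀ (k : ℕ) (A : Set α), A.Finite → ∃ y, P k y ∧ y ∉ A) : ℕ → α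
  | k => (key k (Set.range fun j : Fin k => chooseSeq P key j.1)
      (Set.finite_range _)).choose
  termination_by k => k
  decreasing_by all_goals exact j.2

private lemma chooseSeq_spec {α : Type*} (P : ℕ → α → Prop)
    (key : ∀ (k : ℕ) (A : Set α), A.Finite → ∃ y, P k y ∧ y ∉ A) (k : ℕ) :
    P k (chooseSeq P key k) ∧
      chooseSeq P key k ∉ Set.range (fun j : Fin k => chooseSeq P key j.1) := by
  rw [chooseSeq]
  exact (key k (Set.range fun j : Fin k => chooseSeq P key j.1)
    (Set.finite_range _)).choose_spec

private lemma chooseSeq_injective {α : Type*} (P : ℕ → α → Prop)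
    (key : ∀ (k : ℕ) (A : Set α), A.Finite → ∃ y, P k y ∧ y ∉ A) :
    Function.Injective (chooseSeq P key) := by
  intro i j hij
  by_contra hne
  wlog h : i < j generalizing i j
  · exact this hij.symm (Ne.symm hne) (by omega)
  · exact (chooseSeq_spec P key j).2 ⟨⟨i, h⟩, hij⟩

private instance : FirstCountableTopology (OnePoint (ℝ × ℝ)) := by
  constructor
  intro x
  cases x with
  | infty =>
    show (𝓝 (OnePoint.infty : OnePoint (ℝ × ℝ))).IsCountablyGenerated
    rw [OnePoint.nhds_infty_eq, Filter.coclosedCompact_eq_cocompact,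
      ← Metric.cobounded_eq_cocompact, ← Metric.comap_dist_right_atTop (0 : ℝ × ℝ)]
    infer_instance
  | coe a =>
    show (𝓝 ((a : ℝ × ℝ) : OnePoint (ℝ × ℝ))).IsCountablyGenerated
    rw [OnePoint.nhds_coe_eq]
    infer_instance

/-- Lemma 4.1: absorbing a finite set `F` into the endset: there is a
homeomorphism `h : E ∪ F → E` which is the identity on `E*` and carries `Z ∪ F` onto `Z`. -/
theorem absorb_finite_set_into_endset
    (E Estar Z : Set (OnePoint (ℝ × ℝ)))
    (hEclosed : IsClosed E) (hinfE : OnePoint.infty ∈ E)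
    (hEstarE : Estar ⊆ E) (hZE : Z ⊆ E)
    (hZcount : Z.Countable) (hZinf : Z.Infinite)
    (hinfZ : OnePoint.infty ∉ Z) (hZEstar : Z ∩ Estar = ∅)
    -- every point of `Z` is an isolated point of `E`
    (hiso : ∀ z ∈ Z, ∃ U : Set (OnePoint (ℝ × ℝ)), IsOpen U ∧ U ∩ E = {z})
    -- the set of accumulation points of `Z` in `E` equals `E*`
    (hacc : {x | x ∈ E ∧ AccPt x (Filter.principal Z)} = Estar)
    (F : Set (OnePoint (ℝ × ℝ))) (hFfin : F.Finite)
    (hinfF : OnePoint.infty ∉ F) (hFE : F ∩ E = ∅) :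
    ∃ h : ↥(E ∪ F) ≃ₜ ↥E,
      (∀ x : ↥(E ∪ F), (x : OnePoint (ℝ × ℝ)) ∈ Estar →
        ((h x : OnePoint (ℝ × ℝ)) = (x : OnePoint (ℝ × ℝ)))) ∧
      (∀ x : ↥(E ∪ F), ((x : OnePoint (ℝ × ℝ)) ∈ Z ∪ F ↔
        (h x : OnePoint (ℝ × ℝ)) ∈ Z)) := by
  classical
  have hZd : ∀ {q : OnePoint (ℝ × ℝ)}, q ∈ Z → q ∉ Estar := fun hq hq' =>
    Set.eq_empty_iff_forall_notMem.mp hZEstar _ ⟨hq, hq'⟩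
  have hFd : ∀ {q : OnePoint (ℝ × ℝ)}, q ∈ F → q ∉ E := fun hq hq' =>
    Set.eq_empty_iff_forall_notMem.mp hFE _ ⟨hq, hq'⟩
  -- get an accumulation point p of Z
  obtain ⟨p, hpE, hpacc⟩ := hZinf.exists_accPt_of_subset_isCompact hEclosed.isCompact hZE
  have hpEstar : p ∈ Estar := hacc ▸ (⟨hpE, hpacc⟩ : p ∈ {x | x ∈ E ∧ AccPt x (𝓟 Z)})
  have hpZ : p ∉ Z := fun h => hZd h hpEstar
  -- a countable antitone basis at p
  obtain ⟨b, hb⟩ := (𝓝 p).exists_antitone_basis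
  have key : ∀ (k : ℕ) (A : Set (OnePoint (ℝ × ℝ))), A.Finite →
      ∃ y, (y ∈ Z ∧ y ∈ b k) ∧ y ∉ A := by
    intro k A hA
    have hU : b k ∩ (A \ {p})ᶜ ∈ 𝓝 p := by
      refine inter_mem (hb.mem k) ?_
      exact ((hA.subset diff_subset).isClosed.isOpen_compl).mem_nhds (by simp)
    obtain ⟨y, ⟨hyU, hyZ⟩, hyp⟩ := accPt_iff_nhds.mp hpacc _ hU
    exact ⟨y, ⟨hyZ, hyU.1⟩, fun hyA => hyU.2 ⟨hyA, hyp⟩⟩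
  set z : ℕ → OnePoint (ℝ × ℝ) := chooseSeq _ key with hzdef
  have hzZ : ∀ k, z k ∈ Z := fun k => (chooseSeq_spec _ key k).1.1
  have hzb : ∀ k, z k ∈ b k := fun k => (chooseSeq_spec _ key k).1.2
  have zinj : Function.Injective z := chooseSeq_injective _ key
  have hz_tendsto : Tendsto z atTop (𝓝 p) := hb.tendsto hzb
  have hzE : ∀ k, z k ∈ E := fun k => hZE (hzZ k)
  -- enumerate F
  obtain ⟨n, f, hfr⟩ := hFfin.fin_embedding
  have hfF : ∀ i, f i ∈ F := fun i => hfr ▸ mem_range_self i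
  have hfE : ∀ i, f i ∉ E := fun i => hFd (hfF i)
  have hfz : ∀ (i : Fin n) (k : ℕ), f i ≠ z k := fun i k h => hfE i (h ▸ hzE k)
  have hzF : ∀ k, z k ∉ F := fun k h => hFd h (hzE k)
  have hpF : p ∉ F := fun h => hFd h hpE
  have hprz : p ∉ Set.range z := by rintro ⟨k, hk⟩; exact hpZ (hk ▸ hzZ k)
  -- the map g and its inverse
  set g : OnePoint (ℝ × ℝ) → OnePoint (ℝ × ℝ) := fun x =>
    if hx : ∃ i : Fin n, f i = x then z hx.choose
    else if hx : ∃ k : ℕ, z k = x then z (hx.choose + n)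
    else x with hgdef
  set ginv : OnePoint (ℝ × ℝ) → OnePoint (ℝ × ℝ) := fun y =>
    if hy : ∃ k : ℕ, z k = y then
      if hk : hy.choose < n then f ⟨hy.choose, hk⟩ else z (hy.choose - n)
    else y with hginvdef
  have gf : ∀ i : Fin n, g (f i) = z i := by
    intro i
    have h1 : ∃ i' : Fin n, f i' = f i := ⟨i, rfl⟩
    have h2 : h1.choose = i := f.injective h1.choose_spec
    simp only [hgdef, dif_pos h1, h2]
  have gz : ∀ k : ℕ, g (z k) = z (k + n) := by
    intro k
    have h1 : ¬∃ i : Fin n, f i = z k := by rintro ⟨i, hi⟩; exact hfz i k hi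
    have h2 : ∃ k' : ℕ, z k' = z k := ⟨k, rfl⟩
    have h3 : h2.choose = k := zinj h2.choose_spec
    simp only [hgdef, dif_neg h1, dif_pos h2, h3]
  have gid : ∀ x, x ∉ F → x ∉ Set.range z → g x = x := by
    intro x hxF hxz
    have h1 : ¬∃ i : Fin n, f i = x := by rintro ⟨i, rfl⟩; exact hxF (hfF i)
    have h2 : ¬∃ k, z k = x := by rintro ⟨k, rfl⟩; exact hxz (mem_range_self k)
    simp only [hgdef, dif_neg h1, dif_neg h2]
  have ginv_z : ∀ k : ℕ, ginv (z k) =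
      if hk : k < n then f ⟨k, hk⟩ else z (k - n) := by
    intro k
    have h2 : ∃ k', z k' = z k := ⟨k, rfl⟩
    have h3 : h2.choose = k := zinj h2.choose_spec
    simp only [hginvdef, dif_pos h2, h3]
  have ginv_id : ∀ y, y ∉ Set.range z → ginv y = y := by
    intro y hyz
    have h2 : ¬∃ k, z k = y := by rintro ⟨k, rfl⟩; exact hyz (mem_range_self k)
    simp only [hginvdef, dif_neg h2]
  -- inverse properties
  have gl : ∀ x, x ∈ E ∪ F → ginv (g x) = x := by
    intro x hx
    by_cases hxF : x ∈ F
    · obtain ⟨i, rfl⟩ : ∃ i, f i = x := by rwa [← hfr, mem_range] at hxF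
      rw [gf, ginv_z]
      rw [dif_pos i.isLt]
    · by_cases hxz : x ∈ Set.range z
      · obtain ⟨k, rfl⟩ := hxz
        rw [gz, ginv_z, dif_neg (by omega : ¬ k + n < n)]
        congr 1
        omega
      · rw [gid x hxF hxz, ginv_id x hxz]
  have gr : ∀ y, y ∈ E → g (ginv y) = y := by
    intro y hy
    by_cases hyz : y ∈ Set.range z
    · obtain ⟨k, rfl⟩ := hyz
      rw [ginv_z]
      by_cases hk : k < n
      · rw [dif_pos hk, gf]
      · rw [dif_neg hk, gz]
        congr 1
        omega
    · have hyF : y ∉ F := fun hF => hFd hF hy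
      rw [ginv_id y hyz, gid y hyF hyz]
  have gmem : ∀ x, x ∈ E ∪ F → g x ∈ E := by
    intro x hx
    by_cases hxF : x ∈ F
    · obtain ⟨i, rfl⟩ : ∃ i, f i = x := by rwa [← hfr, mem_range] at hxF
      rw [gf]; exact hzE i
    · by_cases hxz : x ∈ Set.range z
      · obtain ⟨k, rfl⟩ := hxz
        rw [gz]; exact hzE (k + n)
      · rw [gid x hxF hxz]
        exact hx.resolve_right hxF
  have ginvmem : ∀ y, y ∈ E → ginv y ∈ E ∪ F := by
    intro y hy
    by_cases hyz : y ∈ Set.range z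
    · obtain ⟨k, rfl⟩ := hyz
      rw [ginv_z]
      by_cases hk : k < n
      · rw [dif_pos hk]; exact Or.inr (hfF _)
      · rw [dif_neg hk]; exact Or.inl (hzE _)
    · rw [ginv_id y hyz]; exact Or.inl hy
  -- the equivalence
  let h0 : ↥(E ∪ F) ≃ ↥E :=
    { toFun := fun x => ⟨g x, gmem x x.2⟩
      invFun := fun y => ⟨ginv y, ginvmem y y.2⟩
      left_inv := fun x => Subtype.ext (gl x x.2)
      right_inv := fun y => Subtype.ext (gr y y.2) }
  -- continuity at isolated points
  have isolated : ∀ x ∈ E ∪ F, (∃ U : Set (OnePoint (ℝ × ℝ)), IsOpen U ∧ U ∩ (E ∪ F) = {x}) →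
      ContinuousWithinAt g (E ∪ F) x := by
    rintro x hx ⟨U, hUo, hU⟩
    have hxU : x ∈ U := (hU.ge (mem_singleton _)).1
    have hpure : 𝓝[E ∪ F] x = pure x := by
      refine le_antisymm ?_ ?_
      · calc 𝓝[E ∪ F] x ≤ 𝓟 U ⊓ 𝓟 (E ∪ F) :=
              inf_le_inf (le_principal_iff.mpr (hUo.mem_nhds hxU)) le_rfl
          _ = 𝓟 (U ∩ (E ∪ F)) := inf_principal
          _ = pure x := by rw [hU, principal_singleton]
      · exact le_inf (pure_le_nhds x) (le_principal_iff.mpr (mem_pure.mpr hx))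
    show Tendsto g (𝓝[E ∪ F] x) (𝓝 (g x))
    rw [hpure]
    exact tendsto_pure_nhds g x
  -- the main continuity argument
  have hcont : ContinuousOn g (E ∪ F) := by
    intro x hx
    by_cases hxF : x ∈ F
    · apply isolated x hx
      refine ⟨Eᶜ ∩ (F \ {x})ᶜ,
        hEclosed.isOpen_compl.inter ((hFfin.subset diff_subset).isClosed.isOpen_compl), ?_⟩
      have hxE : x ∉ E := hFd hxF
      apply subset_antisymm
      · rintro y ⟨⟨hyE, hyF'⟩, hyEF⟩
        rcases hyEF with h | h
        · exact absurd h hyE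
        · by_contra hne
          exact hyF' ⟨h, hne⟩
      · rintro y rfl
        exact ⟨⟨hxE, fun h => h.2 rfl⟩, Or.inr hxF⟩
    · have hxE : x ∈ E := hx.resolve_right hxF
      by_cases hxZ : x ∈ Z
      · apply isolated x hx
        obtain ⟨U, hUo, hUE⟩ := hiso x hxZ
        have hxU : x ∈ U := (hUE.ge (mem_singleton _)).1
        refine ⟨U ∩ (F \ {x})ᶜ,
          hUo.inter ((hFfin.subset diff_subset).isClosed.isOpen_compl), ?_⟩
        apply subset_antisymm
        · rintro y ⟨⟨hyU, hyF'⟩, hyEF⟩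
          rcases hyEF with h | h
          · exact hUE.le ⟨hyU, h⟩
          · by_contra hne
            exact hyF' ⟨h, hne⟩
        · rintro y rfl
          exact ⟨⟨hxU, fun h => h.2 rfl⟩, Or.inl hxE⟩
      · have hxrz : x ∉ Set.range z := by rintro ⟨k, rfl⟩; exact hxZ (hzZ k)
        by_cases hxp : x = p
        · subst hxp
          have hgp : g x = x := gid x hxF hxrz
          show Tendsto g (𝓝[E ∪ F] x) (𝓝 (g x))
          rw [hgp, Filter.tendsto_def]
          intro V hV
          have h2 : Tendsto (fun k => z (k + n)) atTop (𝓝 x) :=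
            hz_tendsto.comp (tendsto_add_atTop_nat n)
          obtain ⟨N, hN⟩ := eventually_atTop.mp (h2.eventually_mem hV)
          set A : Set (OnePoint (ℝ × ℝ)) := F ∪ (z '' {k | k < N}) with hAdef
          have hAfin : A.Finite := hFfin.union ((Set.finite_Iio N).image z)
          have hxA : x ∉ A := by
            rintro (h | ⟨k, _, hk⟩)
            · exact hxF h
            · exact hxrz ⟨k, hk⟩
          have hW : V ∩ Aᶜ ∈ 𝓝 x :=
            inter_mem hV ((hAfin.isClosed.isOpen_compl).mem_nhds hxA)
          refine mem_of_superset
            (inter_mem (mem_nhdsWithin_of_mem_nhds hW) self_mem_nhdsWithin) ?_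
          rintro w ⟨⟨hwV, hwA⟩, hwEF⟩
          by_cases hwF : w ∈ F
          · exact absurd (Or.inl hwF) hwA
          by_cases hwz : w ∈ Set.range z
          · obtain ⟨k, rfl⟩ := hwz
            have hk : ¬ k < N := fun hk => hwA (Or.inr ⟨k, hk, rfl⟩)
            show g (z k) ∈ V
            rw [gz]
            exact hN k (by omega)
          · show g w ∈ V
            rw [gid w hwF hwz]
            exact hwV
        · -- g is eventually the identity near x
          obtain ⟨V, W, hVo, hWo, hxV, hpW, hVW⟩ := t2_separation hxp
          obtain ⟨N, hN⟩ :=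
            eventually_atTop.mp (hz_tendsto.eventually_mem (hWo.mem_nhds hpW))
          set A : Set (OnePoint (ℝ × ℝ)) := F ∪ (z '' {k | k < N}) with hAdef
          have hAfin : A.Finite := hFfin.union ((Set.finite_Iio N).image z)
          have hxA : x ∉ A := by
            rintro (h | ⟨k, _, hk⟩)
            · exact hxF h
            · exact hxrz ⟨k, hk⟩
          have hU : V ∩ Aᶜ ∈ 𝓝 x :=
            inter_mem (hVo.mem_nhds hxV) ((hAfin.isClosed.isOpen_compl).mem_nhds hxA)
          refine continuousWithinAt_id.congr_of_eventuallyEq ?_ (gid x hxF hxrz)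
          filter_upwards [mem_nhdsWithin_of_mem_nhds hU, self_mem_nhdsWithin]
            with w hw hwEF
          obtain ⟨hwV, hwA⟩ := hw
          by_cases hwF : w ∈ F
          · exact absurd (Or.inl hwF) hwA
          by_cases hwz : w ∈ Set.range z
          · obtain ⟨k, rfl⟩ := hwz
            by_cases hk : k < N
            · exact absurd (Or.inr ⟨k, hk, rfl⟩) hwA
            · exact absurd (hN k (by omega)) (Set.disjoint_left.mp hVW hwV)
          · exact gid w hwF hwz
  haveI : CompactSpace ↥(E ∪ F) :=
    isCompact_iff_compactSpace.mp (hEclosed.union hFfin.isClosed).isCompact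
  have hcont' : Continuous (h0 : ↥(E ∪ F) → ↥E) :=
    (continuousOn_iff_continuous_restrict.mp hcont).subtype_mk _
  refine ⟨hcont'.homeoOfEquivCompactToT2, ?_, ?_⟩
  · intro x hxEstar
    have hxZ : (x : OnePoint (ℝ × ℝ)) ∉ Z := fun h => hZd h hxEstar
    have hxF : (x : OnePoint (ℝ × ℝ)) ∉ F := fun h => hFd h (hEstarE hxEstar)
    have hxrz : (x : OnePoint (ℝ × ℝ)) ∉ Set.range z := by
      rintro ⟨k, hk⟩; exact hxZ (hk ▸ hzZ k)
    exact gid x hxF hxrz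
  · intro x
    constructor
    · rintro (hxZ | hxF)
      · by_cases hxrz : (x : OnePoint (ℝ × ℝ)) ∈ Set.range z
        · obtain ⟨k, hk⟩ := hxrz
          have e : g x = z (k + n) := hk ▸ gz k
          exact Set.mem_of_eq_of_mem e (hzZ (k + n))
        · have e : g (x : OnePoint (ℝ × ℝ)) = x := gid x (fun h => hFd h (hZE hxZ)) hxrz
          show g (x : OnePoint (ℝ × ℝ)) ∈ Z
          exact Set.mem_of_eq_of_mem e hxZ
      · have h' : (x : OnePoint (ℝ × ℝ)) ∈ range ⇑f := by rw [hfr]; exact hxF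
        obtain ⟨i, hi⟩ := h'
        have e : g (x : OnePoint (ℝ × ℝ)) = z i := hi ▸ gf i
        exact Set.mem_of_eq_of_mem e (hzZ i)
    · intro hgZ
      by_contra hxc
      rw [mem_union] at hxc
      push_neg at hxc
      obtain ⟨hxZ, hxF⟩ := hxc
      have hxrz : (x : OnePoint (ℝ × ℝ)) ∉ Set.range z := by
        rintro ⟨k, hk⟩; exact hxZ (hk ▸ hzZ k)
      have e : g (x : OnePoint (ℝ × ℝ)) = x := gid x hxF hxrz
      have hgZ' : g (x : OnePoint (ℝ × ℝ)) ∈ Z := hgZ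
      exact hxZ (Set.mem_of_eq_of_mem e.symm hgZ')
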